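/- Let G be an (n, m)-superconcentrator of depth d, and form the random linear map C_G : F^n → F^m over a finite field F by replacing each vertex with an addition gate and assigning each edge e an independent uniformly random coefficient r_e ∈ F. Then with probability at least 1 - Σ_{i=1}^n C(n,i)·C(m,i)·(d·i)/|F|, every square submatrix of the resulting generator matrix is nonsingular, i.e., C_G encodes a superconcentrator-induced code. -/

import Mathlib

open scoped Classical

/-- `p` is a (nonempty) directed path from `a` to `b` in the digraph with edge relation `E`. -/
def IsPathFromTo {V : Type*} (E : V → V → Prop) (p : List V) (a b : V) : Prop :=
  p.Chain' E ∧ p.head? = some a ∧ p.getLast? = some b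

/-- A family of pairwise vertex-disjoint directed paths, one starting at each vertex of `S`,
each ending at a vertex of `T`. -/
def HasDisjointPathFamily {V : Type*} (E : V → V → Prop) (S T : Finset V) : Prop :=
  ∃ P : V → List V,
    (∀ s ∈ S, ∃ t ∈ T, IsPathFromTo E (P s) s t) ∧
    (∀ s ∈ S, ∀ s' ∈ S, s ≠ s' → ∀ v, v ∈ P s → v ∉ P s')

/-- `G` (with edge relation `E`, inputs `inp`, outputs `out`) is an `(n, m)`-superconcentrator:
any equal-size sets of inputs and outputs are joined by that many vertex-disjoint paths. -/
def IsSuperconcentrator {V : Type*} {n m : ℕ} (E : V → V → Prop)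
    (inp : Fin n ↪ V) (out : Fin m ↪ V) : Prop :=
  ∀ (X : Finset (Fin n)) (Y : Finset (Fin m)), X.card = Y.card →
    HasDisjointPathFamily E (X.map inp) (Y.map out)

/-- The generator matrix of the linear circuit obtained by putting an addition gate at
each vertex and coefficient `r e` on each edge `e`:
`M i j = Σ_{paths p : inp i → out j} Π_{e ∈ p} r e`. -/
noncomputable def genMatrix {V F : Type*} [Field F] {n m : ℕ} (E : V → V → Prop)
    (inp : Fin n ↪ V) (out : Fin m ↪ V) (r : V × V → F) : Matrix (Fin n) (Fin m) F :=
  fun i j => ∑ᶠ p ∈ {p : List V | IsPathFromTo E p (inp i) (out j)},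
    ((p.zip p.tail).map r).prod

set_option linter.unusedSectionVars false

lemma poly_root_count {F : Type*} [Field F] [Fintype F] (q : Polynomial F) (hq : q ≠ 0) :
    (Finset.univ.filter fun y : F => q.eval y = 0).card ≤ q.natDegree := by
  have h1 : (Finset.univ.filter fun y : F => q.eval y = 0) ⊆ q.roots.toFinset := by
    intro y hy
    simp only [Finset.mem_filter] at hy
    simp [Multiset.mem_toFinset, Polynomial.mem_roots, hq, Polynomial.IsRoot, hy.2]
  calc (Finset.univ.filter fun y : F => q.eval y = 0).card ≤ q.roots.toFinset.card :=
        Finset.card_le_card h1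
    _ ≤ Multiset.card q.roots := q.roots.toFinset_card_le
    _ ≤ q.natDegree := q.card_roots'

lemma schwartz_zippel_fin {F : Type*} [Field F] [Fintype F] :
    ∀ (n : ℕ) (p : MvPolynomial (Fin n) F), p ≠ 0 →
    (Finset.univ.filter fun r : Fin n → F => MvPolynomial.eval r p = 0).card * Fintype.card F
      ≤ p.totalDegree * (Fintype.card F) ^ n := by
  intro n
  induction n with
  | zero =>
    intro p hp
    obtain ⟨c, rfl⟩ := MvPolynomial.C_surjective (Fin 0) p
    have hc : c ≠ 0 := fun h => hp (by rw [h, map_zero])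
    have : (Finset.univ.filter fun r : Fin 0 → F => MvPolynomial.eval r (MvPolynomial.C c) = 0)
        = ∅ := by
      rw [Finset.filter_eq_empty_iff]
      intro r _
      simpa using hc
    rw [this]; simp
  | succ n ih =>
    intro p hp
    set N := Fintype.card F with hN
    set p' := MvPolynomial.finSuccEquiv F n p with hp'def
    have hp' : p' ≠ 0 := by
      intro h
      exact hp ((map_eq_zero_iff _ (AlgEquiv.injective _)).mp h)
    set d₀ := p'.natDegree with hd0
    set lc := p'.leadingCoeff with hlc
    have hlc0 : lc ≠ 0 := Polynomial.leadingCoeff_ne_zero.mpr hp'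
    have hdeg : lc.totalDegree + d₀ ≤ p.totalDegree := by
      have := MvPolynomial.totalDegree_coeff_finSuccEquiv_add_le p d₀
        (by rw [← Polynomial.leadingCoeff]; exact hlc0)
      rw [← Polynomial.leadingCoeff] at this
      exact this
    set Z := (Finset.univ.filter fun r : Fin (n+1) → F => MvPolynomial.eval r p = 0) with hZ
    set Z' := (Finset.univ.filter fun x : F × (Fin n → F) =>
      MvPolynomial.eval (Fin.cons x.1 x.2) p = 0) with hZ'
    have hcons : ∀ r : Fin (n+1) → F, (Fin.cons (r 0) (fun i => r i.succ) : Fin (n+1) → F) = r :=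
      fun r => funext (Fin.cases rfl (fun i => rfl))
    have hcard : Z.card = Z'.card := by
      refine Finset.card_bij' (fun r _ => (r 0, fun i => r i.succ))
        (fun x _ => Fin.cons x.1 x.2) ?_ ?_ ?_ ?_
      · intro r hr
        simp only [Z', Finset.mem_filter, Finset.mem_univ, true_and]
        rw [hcons r]
        exact (Finset.mem_filter.mp hr).2
      · intro x hx
        simp only [Z, Finset.mem_filter, Finset.mem_univ, true_and]
        simpa using (Finset.mem_filter.mp hx).2
      · intro r _
        exact hcons r
      · intro x _
        simp
    -- per-tail zero count
    set z : (Fin n → F) → ℕ := fun t =>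
      (Finset.univ.filter fun y : F => MvPolynomial.eval (Fin.cons y t) p = 0).card with hz
    have hfiber : Z'.card = ∑ t : Fin n → F, z t := by
      rw [Finset.card_eq_sum_card_fiberwise (f := Prod.snd) (t := Finset.univ)
        (fun x _ => Finset.mem_univ _)]
      refine Finset.sum_congr rfl (fun t _ => ?_)
      refine Finset.card_bij' (fun x _ => x.1) (fun y _ => (y, t)) ?_ ?_ ?_ ?_
      · intro x hx
        simp only [Z', Finset.mem_filter, Finset.mem_univ, true_and] at hx
        simp only [Finset.mem_filter, Finset.mem_univ, true_and]
        rw [← hx.2]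
        exact hx.1
      · intro y hy
        simp only [Finset.mem_filter, Finset.mem_univ, true_and] at hy
        simp [Z', hy]
      · intro x hx
        simp only [Finset.mem_filter] at hx
        exact Prod.ext rfl hx.2.symm
      · intro y _
        rfl
    have hzbound : ∀ t : Fin n → F, z t ≤ if MvPolynomial.eval t lc = 0 then N else d₀ := by
      intro t
      by_cases h : MvPolynomial.eval t lc = 0
      · rw [if_pos h]
        simpa [hN] using Finset.card_filter_le Finset.univ _
      · rw [if_neg h]
        set q : Polynomial F := p'.map (MvPolynomial.eval t) with hq
        have hq0 : q ≠ 0 := by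
          intro hq0
          apply h
          have : q.coeff d₀ = MvPolynomial.eval t (p'.coeff d₀) := Polynomial.coeff_map _ _
          rw [hq0, Polynomial.coeff_zero] at this
          exact this.symm
        have hqd : q.natDegree ≤ d₀ := Polynomial.natDegree_map_le
        have heval : ∀ y : F, MvPolynomial.eval (Fin.cons y t) p = q.eval y := fun y =>
          MvPolynomial.eval_eq_eval_mv_eval' t y p
        calc z t = (Finset.univ.filter fun y : F => q.eval y = 0).card := by
              simp only [hz]
              congr 1
              exact Finset.filter_congr (fun y _ => by rw [heval y])
          _ ≤ q.natDegree := poly_root_count q hq0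
          _ ≤ d₀ := hqd
    set bad := (Finset.univ.filter fun t : Fin n → F => MvPolynomial.eval t lc = 0) with hbad
    have hsplit : ∑ t : Fin n → F, (if MvPolynomial.eval t lc = 0 then N else d₀)
        ≤ bad.card * N + d₀ * N ^ n := by
      rw [← Finset.sum_filter_add_sum_filter_not Finset.univ
        (fun t => MvPolynomial.eval t lc = 0)]
      have h1 : ∑ t ∈ bad, (if MvPolynomial.eval t lc = 0 then N else d₀) = bad.card * N := by
        rw [Finset.sum_congr rfl (fun t ht => if_pos (Finset.mem_filter.mp ht).2)]
        simp [mul_comm]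
        exact Or.inl rfl
      have h2 : ∑ t ∈ (Finset.univ.filter fun t => ¬ MvPolynomial.eval t lc = 0),
          (if MvPolynomial.eval t lc = 0 then N else d₀) ≤ d₀ * N ^ n := by
        rw [Finset.sum_congr rfl (fun t ht => if_neg (Finset.mem_filter.mp ht).2)]
        simp only [Finset.sum_const, smul_eq_mul]
        calc _ ≤ (Finset.univ : Finset (Fin n → F)).card * d₀ :=
              Nat.mul_le_mul_right _ (Finset.card_filter_le _ _)
          _ = d₀ * N ^ n := by
              rw [Finset.card_univ, Fintype.card_fun]
              ring_nf
              simp [hN, mul_comm]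
      rw [h1]
      exact Nat.add_le_add_left h2 _
    have hIH : bad.card * N ≤ lc.totalDegree * N ^ n := ih lc hlc0
    have hNN : Z.card ≤ bad.card * N + d₀ * N ^ n := by
      rw [hcard, hfiber]
      exact le_trans (Finset.sum_le_sum (fun t _ => hzbound t)) hsplit
    calc Z.card * N ≤ (bad.card * N + d₀ * N ^ n) * N := Nat.mul_le_mul_right _ hNN
      _ = (bad.card * N) * N + d₀ * N ^ (n+1) := by ring
      _ ≤ (lc.totalDegree * N ^ n) * N + d₀ * N ^ (n+1) :=
          Nat.add_le_add_right (Nat.mul_le_mul_right _ hIH) _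
      _ = (lc.totalDegree + d₀) * N ^ (n+1) := by ring
      _ ≤ p.totalDegree * N ^ (n+1) := Nat.mul_le_mul_right _ hdeg

lemma schwartz_zippel {ι : Type*} [Fintype ι] {F : Type*} [Field F] [Fintype F]
    (p : MvPolynomial ι F) (hp : p ≠ 0) :
    (Finset.univ.filter fun r : ι → F => MvPolynomial.eval r p = 0).card * Fintype.card F
      ≤ p.totalDegree * (Fintype.card F) ^ (Fintype.card ι) := by
  classical
  set e := Fintype.equivFin ι with he
  set q := MvPolynomial.rename e p with hq
  have hq0 : q ≠ 0 := by
    intro h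
    apply hp
    have hinj := MvPolynomial.rename_injective (R := F) e e.injective
    apply hinj
    rw [← hq, h, map_zero]
  have hcard : (Finset.univ.filter fun r : ι → F => MvPolynomial.eval r p = 0).card
      = (Finset.univ.filter fun s : Fin (Fintype.card ι) → F =>
          MvPolynomial.eval s q = 0).card := by
    refine Finset.card_bij' (fun r _ => r ∘ e.symm) (fun s _ => s ∘ e) ?_ ?_ ?_ ?_
    · intro r hr
      rw [Finset.mem_filter] at hr ⊢
      refine ⟨Finset.mem_univ _, ?_⟩
      rw [hq, MvPolynomial.eval_rename]
      have : (r ∘ e.symm) ∘ e = r := by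
        funext x; simp
      rw [this]
      exact hr.2
    · intro s hs
      rw [Finset.mem_filter] at hs ⊢
      refine ⟨Finset.mem_univ _, ?_⟩
      have := hs.2
      rwa [hq, MvPolynomial.eval_rename] at this
    · intro r _; funext x; simp
    · intro s _; funext x; simp
  rw [hcard]
  calc _ ≤ q.totalDegree * (Fintype.card F) ^ (Fintype.card ι) :=
        schwartz_zippel_fin _ q hq0
    _ ≤ p.totalDegree * (Fintype.card F) ^ (Fintype.card ι) :=
        Nat.mul_le_mul_right _ (MvPolynomial.totalDegree_rename_le _ _)

lemma aux_mem_of_getLast? {α : Type*} {l : List α} {a : α} (h : l.getLast? = some a) : a ∈ l := by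
  cases l with
  | nil => simp at h
  | cons x xs =>
    rw [List.getLast?_eq_getLast (List.cons_ne_nil x xs)] at h
    rw [← Option.some_inj.mp h]
    exact List.getLast_mem _

lemma aux_exists_dup {α : Type*} : ∀ (l : List α), ¬ l.Nodup →
    ∃ (v : α) (l₁ l₂ l₃ : List α), l = l₁ ++ v :: l₂ ++ v :: l₃ := by
  intro l
  induction l with
  | nil => intro h; exact absurd List.nodup_nil h
  | cons x xs ih =>
    intro h
    rw [List.nodup_cons] at h
    by_cases hx : x ∈ xs
    · obtain ⟨s, t, rfl⟩ := List.append_of_mem hx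
      exact ⟨x, [], s, t, by simp⟩
    · have hxs : ¬ xs.Nodup := fun hn => h ⟨hx, hn⟩
      obtain ⟨v, l₁, l₂, l₃, rfl⟩ := ih hxs
      exact ⟨v, x :: l₁, l₂, l₃, by simp⟩

lemma aux_shortcut {α : Type*} (E : α → α → Prop) :
    ∀ (N : ℕ) (p : List α), p.length ≤ N → ∀ a b, p.Chain' E → p.head? = some a →
      p.getLast? = some b →
      ∃ q : List α, q.Chain' E ∧ q.head? = some a ∧ q.getLast? = some b ∧ q.Nodup ∧
        ∀ v ∈ q, v ∈ p := by
  intro N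
  induction N with
  | zero =>
    intro p hlen a b _ hh _
    interval_cases hp : p.length
    · rw [List.length_eq_zero_iff.mp hp] at hh; simp at hh
  | succ N ih =>
    intro p hlen a b hc hh hl
    by_cases hnd : p.Nodup
    · exact ⟨p, hc, hh, hl, hnd, fun v hv => hv⟩
    obtain ⟨v, l₁, l₂, l₃, rfl⟩ := aux_exists_dup p hnd
    have hlen' : (l₁ ++ v :: l₃).length ≤ N := by
      simp only [List.length_append, List.length_cons] at hlen ⊢
      omega
    simp only [List.Chain', List.isChain_append] at hc
    obtain ⟨h1, h2, h3⟩ := hc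
    obtain ⟨h1a, h1b, h1c⟩ := h1
    have hchain : List.Chain' E (l₁ ++ v :: l₃) := by
      simp only [List.Chain', List.isChain_append]
      exact ⟨h1a, h2, fun x hx y hy => h1c x hx y (by simpa using hy)⟩
    have hhead : (l₁ ++ v :: l₃).head? = some a := by
      cases l₁ with
      | nil => simpa using hh
      | cons z zs =>
        simp only [List.cons_append, List.head?_cons] at hh ⊢
        exact hh
    have hlast : (l₁ ++ v :: l₃).getLast? = some b := by
      rw [List.getLast?_append_cons] at hl ⊢
      exact hl
    obtain ⟨q, hq1, hq2, hq3, hq4, hq5⟩ := ih _ hlen' a b hchain hhead hlast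
    refine ⟨q, hq1, hq2, hq3, hq4, fun w hw => ?_⟩
    have := hq5 w hw
    simp only [List.mem_append, List.mem_cons] at this ⊢
    tauto

lemma aux_chain_prefix {α : Type*} (R : α × α → Prop) :
    ∀ (p L : List α), L.Nodup →
      (∀ u w, R (u, w) → u ∈ L → (u, w) ∈ L.zip L.tail) →
      p ≠ [] → p.head? = L.head? → (∀ e ∈ p.zip p.tail, R e) → p <+: L := by
  intro p
  induction p with
  | nil => intro L _ _ h; exact absurd rfl h
  | cons a q ih =>
    intro L hnd hedge _ hh he
    cases L with
    | nil => simp at hh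
    | cons x L' =>
      have hax : a = x := by simpa using hh
      subst hax
      cases q with
      | nil => exact List.cons_prefix_cons.mpr ⟨rfl, List.nil_prefix⟩
      | cons b q' =>
        have hab : R (a, b) := he (a, b) (by simp)
        have hmem : (a, b) ∈ (a :: L').zip L' := hedge a b hab List.mem_cons_self
        cases L' with
        | nil => simp at hmem
        | cons c L'' =>
          have hbc : b = c := by
            rcases List.mem_cons.mp hmem with h | h
            · exact (Prod.mk.injEq _ _ _ _ ▸ h).2
            · exfalso
              have : a ∈ c :: L'' := (List.of_mem_zip h).1
              exact (List.nodup_cons.mp hnd).1 this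
          subst hbc
          have hnd' : (b :: L'').Nodup := (List.nodup_cons.mp hnd).2
          have hedge' : ∀ u w, R (u, w) → u ∈ b :: L'' → (u, w) ∈ (b :: L'').zip L'' := by
            intro u w hR hu
            have : (u, w) ∈ (a :: b :: L'').zip (b :: L'') :=
              hedge u w hR (List.mem_cons_of_mem a hu)
            rcases List.mem_cons.mp this with h | h
            · exfalso
              have : u = a := (Prod.mk.injEq _ _ _ _ ▸ h).1
              exact (List.nodup_cons.mp hnd).1 (this ▸ hu)
            · exact h
          have he' : ∀ e ∈ (b :: q').zip q', R e := fun e hee => he e (List.mem_cons_of_mem _ hee)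
          have := ih (b :: L'') hnd' hedge' (List.cons_ne_nil _ _) rfl he'
          exact List.cons_prefix_cons.mpr ⟨rfl, this⟩

lemma aux_prefix_unique {α : Type*} {L p₁ p₂ : List α} (h : L.Nodup)
    (h₁ : p₁ <+: L) (h₂ : p₂ <+: L) {w : α}
    (g₁ : p₁.getLast? = some w) (g₂ : p₂.getLast? = some w) : p₁ = p₂ := by
  have key : ∀ (q₁ q₂ : List α), q₁ <+: q₂ → q₂.Nodup → q₁.getLast? = some w →
      q₂.getLast? = some w → q₁ = q₂ := by
    intro q₁ q₂ hpre hn hg1 hg2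
    obtain ⟨s, rfl⟩ := hpre
    cases s with
    | nil => simp
    | cons y t =>
      exfalso
      rw [List.getLast?_append_cons] at hg2
      have hw2 : w ∈ y :: t := aux_mem_of_getLast? hg2
      have hw1 : w ∈ q₁ := aux_mem_of_getLast? hg1
      exact List.disjoint_of_nodup_append hn hw1 hw2
  rcases List.prefix_or_prefix_of_prefix h₁ h₂ with hp | hp
  · exact key p₁ p₂ hp (h.sublist h₂.sublist) g₁ g₂
  · exact (key p₂ p₁ hp (h.sublist h₁.sublist) g₂ g₁).symm

section Core

variable {V F : Type*} [Field F] [Fintype F] [Fintype V] {n m d : ℕ} {E : V → V → Prop}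
  {inp : Fin n ↪ V} {out : Fin m ↪ V}

lemma paths_finite
    (hdepth : ∀ (p : List V) (a b : V), IsPathFromTo E p a b → p.length ≤ d + 1) (a b : V) :
    {p : List V | IsPathFromTo E p a b}.Finite :=
  (List.finite_length_le V (d + 1)).subset (fun p hp => hdepth p a b hp)

noncomputable def Ppoly (E : V → V → Prop) (inp : Fin n ↪ V) (out : Fin m ↪ V)
    (i : Fin n) (j : Fin m) : MvPolynomial (V × V) F :=
  ∑ᶠ p ∈ {p : List V | IsPathFromTo E p (inp i) (out j)},
    ((p.zip p.tail).map MvPolynomial.X).prod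

lemma Ppoly_eval
    (hdepth : ∀ (p : List V) (a b : V), IsPathFromTo E p a b → p.length ≤ d + 1)
    (r : V × V → F) (i : Fin n) (j : Fin m) :
    MvPolynomial.eval r (Ppoly (F := F) E inp out i j) = genMatrix E inp out r i j := by
  have hfin := paths_finite (E := E) hdepth (inp i) (out j)
  have hset : {p : List V | IsPathFromTo E p (inp i) (out j)} = ↑hfin.toFinset :=
    hfin.coe_toFinset.symm
  unfold Ppoly genMatrix
  rw [hset, finsum_mem_coe_finset, finsum_mem_coe_finset, map_sum]
  refine Finset.sum_congr rfl fun p _ => ?_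
  rw [map_list_prod, List.map_map]
  congr 1
  refine List.map_congr_left fun e _ => ?_
  simp

lemma Ppoly_degree
    (hdepth : ∀ (p : List V) (a b : V), IsPathFromTo E p a b → p.length ≤ d + 1)
    (i : Fin n) (j : Fin m) :
    (Ppoly (F := F) E inp out i j).totalDegree ≤ d := by
  have hfin := paths_finite (E := E) hdepth (inp i) (out j)
  have hset : {p : List V | IsPathFromTo E p (inp i) (out j)} = ↑hfin.toFinset :=
    hfin.coe_toFinset.symm
  unfold Ppoly
  rw [hset, finsum_mem_coe_finset]
  refine (MvPolynomial.totalDegree_finset_sum _ _).trans (Finset.sup_le fun p hp => ?_)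
  refine (MvPolynomial.totalDegree_list_prod _).trans ?_
  have hlen : p.length ≤ d + 1 := hdepth p _ _ (hfin.mem_toFinset.mp hp)
  have : ((p.zip p.tail).map (MvPolynomial.X (R := F))).map MvPolynomial.totalDegree
      = (p.zip p.tail).map (fun _ => 1) := by
    rw [List.map_map]
    refine List.map_congr_left fun e _ => ?_
    simp only [Function.comp_apply]
    exact MvPolynomial.totalDegree_X (R := F) e
  rw [this, List.map_const', List.sum_replicate, smul_eq_mul, mul_one, List.length_zip,
    List.length_tail]
  omega

end Core

section Main

variable {V F : Type*} [Field F] [Fintype F] [Fintype V] {n m d : ℕ} {E : V → V → Prop}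
  {inp : Fin n ↪ V} {out : Fin m ↪ V}

lemma exists_good_r (hsc : IsSuperconcentrator E inp out)
    (hdepth : ∀ (p : List V) (a b : V), IsPathFromTo E p a b → p.length ≤ d + 1)
    {k : ℕ} (X : Fin k → Fin n) (Y : Fin k → Fin m)
    (hX : Function.Injective X) (hY : Function.Injective Y) :
    ∃ r : V × V → F, ((genMatrix E inp out r).submatrix X Y).det ≠ 0 := by
  classical
  set A : Finset (Fin n) := Finset.univ.image X with hA
  set B : Finset (Fin m) := Finset.univ.image Y with hB
  have hcards : A.card = B.card := by
    rw [hA, hB, Finset.card_image_of_injective _ hX, Finset.card_image_of_injective _ hY]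
  obtain ⟨P, hP1, hP2⟩ := hsc A B hcards
  have hmemS : ∀ a : Fin k, inp (X a) ∈ A.map inp := fun a =>
    Finset.mem_map_of_mem _ (Finset.mem_image_of_mem X (Finset.mem_univ a))
  have hpath : ∀ a : Fin k, ∃ (c : Fin k) (L : List V),
      L.Chain' E ∧ L.head? = some (inp (X a)) ∧ L.getLast? = some (out (Y c)) ∧ L.Nodup ∧
      ∀ v ∈ L, v ∈ P (inp (X a)) := by
    intro a
    obtain ⟨t, ht, hpt⟩ := hP1 _ (hmemS a)
    obtain ⟨y, hy, rfl⟩ := Finset.mem_map.mp ht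
    obtain ⟨c, _, rfl⟩ := Finset.mem_image.mp hy
    obtain ⟨hc, hh, hl⟩ := hpt
    obtain ⟨q, hq1, hq2, hq3, hq4, hq5⟩ :=
      aux_shortcut E (P (inp (X a))).length (P (inp (X a))) le_rfl _ _ hc hh hl
    exact ⟨c, q, hq1, hq2, hq3, hq4, hq5⟩
  choose σ L hL1 hL2 hL3 hL4 hL5 using hpath
  have hdisj : ∀ a a' : Fin k, a ≠ a' → ∀ v, v ∈ L a → v ∉ L a' := by
    intro a a' hne v hv hv'
    have hne' : inp (X a) ≠ inp (X a') := fun h => hne (hX (inp.injective h))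
    exact hP2 _ (hmemS a) _ (hmemS a') hne' v (hL5 a v hv) (hL5 a' v hv')
  have hσinj : Function.Injective σ := by
    intro a a' h
    by_contra hne
    have h1 : out (Y (σ a)) ∈ L a := aux_mem_of_getLast? (hL3 a)
    have h2 : out (Y (σ a')) ∈ L a' := aux_mem_of_getLast? (hL3 a')
    rw [← h] at h2
    exact hdisj a a' hne _ h1 h2
  have hσbij : Function.Bijective σ := Finite.injective_iff_bijective.mp hσinj
  set R : V × V → Prop := fun e => ∃ a : Fin k, e ∈ (L a).zip (L a).tail with hR
  set r : V × V → F := fun e => if R e then 1 else 0 with hr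
  refine ⟨r, ?_⟩
  -- key structural fact
  have hkey : ∀ (a c : Fin k) (p : List V), IsPathFromTo E p (inp (X a)) (out (Y c)) →
      (∀ e ∈ p.zip p.tail, R e) → σ a = c ∧ p = L a := by
    rintro a c p ⟨hc', hh', hl'⟩ hall
    have hpre : p <+: L a := by
      refine aux_chain_prefix R p (L a) (hL4 a) ?_ ?_ ?_ hall
      · rintro u w ⟨a', hzw⟩ hu
        by_cases haa : a' = a
        · exact haa ▸ hzw
        · exact absurd hu (hdisj a' a haa _ (List.of_mem_zip hzw).1)
      · intro hnil
        rw [hnil] at hh'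
        simp at hh'
      · rw [hh', hL2 a]
    have hocp : out (Y c) ∈ L a := hpre.sublist.subset (aux_mem_of_getLast? hl')
    obtain ⟨a'', ha''⟩ := hσbij.2 c
    have hocp' : out (Y c) ∈ L a'' := by
      have := aux_mem_of_getLast? (hL3 a'')
      rwa [ha''] at this
    have haa : a = a'' := by
      by_contra hne
      exact hdisj a a'' hne _ hocp hocp'
    subst haa
    refine ⟨ha'', ?_⟩
    refine aux_prefix_unique (hL4 a) hpre (List.prefix_refl _) hl' ?_
    rw [hL3 a, ha'']
  have hentry : ∀ a c : Fin k, (genMatrix E inp out r) (X a) (Y c)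
      = if σ a = c then 1 else 0 := by
    intro a c
    have hfin := paths_finite (E := E) hdepth (inp (X a)) (out (Y c))
    have hset : {p : List V | IsPathFromTo E p (inp (X a)) (out (Y c))} = ↑hfin.toFinset :=
      hfin.coe_toFinset.symm
    show (∑ᶠ p ∈ {p : List V | IsPathFromTo E p (inp (X a)) (out (Y c))},
      ((p.zip p.tail).map r).prod) = _
    rw [hset, finsum_mem_coe_finset]
    have hterm : ∀ p ∈ hfin.toFinset, ((p.zip p.tail).map r).prod
        = if (∀ e ∈ p.zip p.tail, R e) then (1 : F) else 0 := by
      intro p _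
      by_cases hall : ∀ e ∈ p.zip p.tail, R e
      · rw [if_pos hall]
        apply List.prod_eq_one
        intro x hx
        obtain ⟨e, he, rfl⟩ := List.mem_map.mp hx
        simp [hr, hall e he]
      · rw [if_neg hall]
        push_neg at hall
        obtain ⟨e, he, hre⟩ := hall
        apply List.prod_eq_zero
        rw [List.mem_map]
        exact ⟨e, he, by simp [hr, hre]⟩
    rw [Finset.sum_congr rfl hterm, Finset.sum_boole]
    by_cases hcase : σ a = c
    · rw [if_pos hcase]
      have hone : hfin.toFinset.filter (fun p => ∀ e ∈ p.zip p.tail, R e) = {L a} := by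
        apply Finset.eq_singleton_iff_unique_mem.mpr
        constructor
        · rw [Finset.mem_filter, Set.Finite.mem_toFinset]
          exact ⟨⟨hL1 a, hL2 a, hcase ▸ hL3 a⟩, fun e he => ⟨a, he⟩⟩
        · intro p hp
          rw [Finset.mem_filter, Set.Finite.mem_toFinset] at hp
          exact (hkey a c p hp.1 hp.2).2
      rw [hone]
      simp
    · rw [if_neg hcase]
      have hzero : hfin.toFinset.filter (fun p => ∀ e ∈ p.zip p.tail, R e) = ∅ := by
        rw [Finset.filter_eq_empty_iff]
        intro p hp
        rw [Set.Finite.mem_toFinset] at hp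
        intro hall
        exact hcase (hkey a c p hp hall).1
      rw [hzero]
      simp
  -- determinant is ± 1
  set σe : Equiv.Perm (Fin k) := Equiv.ofBijective σ hσbij with hσe
  have hmat : (genMatrix E inp out r).submatrix X Y
      = (1 : Matrix (Fin k) (Fin k) F).submatrix σe id := by
    ext i j
    rw [Matrix.submatrix_apply, hentry i j, Matrix.submatrix_apply, id_eq, Matrix.one_apply]
    congr 1
  rw [hmat, Matrix.det_permute, Matrix.det_one, mul_one]
  rcases Int.units_eq_one_or (Equiv.Perm.sign σe) with hs | hs <;> rw [hs] <;> simp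

noncomputable def detPoly (E : V → V → Prop) (inp : Fin n ↪ V) (out : Fin m ↪ V)
    {k : ℕ} (X : Fin k → Fin n) (Y : Fin k → Fin m) : MvPolynomial (V × V) F :=
  (Matrix.of fun a c => Ppoly (F := F) E inp out (X a) (Y c)).det

lemma detPoly_eval
    (hdepth : ∀ (p : List V) (a b : V), IsPathFromTo E p a b → p.length ≤ d + 1)
    {k : ℕ} (X : Fin k → Fin n) (Y : Fin k → Fin m) (r : V × V → F) :
    MvPolynomial.eval r (detPoly (F := F) E inp out X Y)
      = ((genMatrix E inp out r).submatrix X Y).det := by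
  unfold detPoly
  rw [RingHom.map_det]
  congr 1
  ext a c
  simp only [Matrix.map_apply, Matrix.of_apply, Matrix.submatrix_apply]
  exact Ppoly_eval hdepth r (X a) (Y c)

lemma detPoly_degree
    (hdepth : ∀ (p : List V) (a b : V), IsPathFromTo E p a b → p.length ≤ d + 1)
    {k : ℕ} (X : Fin k → Fin n) (Y : Fin k → Fin m) :
    (detPoly (F := F) E inp out X Y).totalDegree ≤ k * d := by
  unfold detPoly
  rw [Matrix.det_apply]
  refine (MvPolynomial.totalDegree_finset_sum _ _).trans (Finset.sup_le fun σ _ => ?_)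
  refine (MvPolynomial.totalDegree_smul_le _ _).trans ?_
  refine (MvPolynomial.totalDegree_finset_prod _ _).trans ?_
  calc ∑ i, (Ppoly (F := F) E inp out (X (σ i)) (Y i)).totalDegree
      ≤ ∑ _i : Fin k, d := Finset.sum_le_sum (fun i _ => Ppoly_degree hdepth _ _)
    _ = k * d := by simp [Finset.sum_const, mul_comm]

lemma detPoly_ne_zero (hsc : IsSuperconcentrator E inp out)
    (hdepth : ∀ (p : List V) (a b : V), IsPathFromTo E p a b → p.length ≤ d + 1)
    {k : ℕ} (X : Fin k → Fin n) (Y : Fin k → Fin m)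
    (hX : Function.Injective X) (hY : Function.Injective Y) :
    detPoly (F := F) E inp out X Y ≠ 0 := by
  obtain ⟨r, hr⟩ := exists_good_r (F := F) hsc hdepth X Y hX hY
  intro h
  apply hr
  rw [← detPoly_eval hdepth, h, map_zero]

end Main

/-- Assigning independent uniform random coefficients over a finite field `F` to the edges of
an `(n,m)`-superconcentrator of depth `d`, with probability at least
`1 - Σ_{i=1}^n C(n,i) C(m,i) d i / |F|` every square submatrix of the resulting generator
matrix is nonsingular, i.e. the circuit encodes a superconcentrator-induced code. -/
theorem stmt_13 {V F : Type*} [Field F] [Fintype F] [Fintype V] {n m d : ℕ}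
    (E : V → V → Prop) (inp : Fin n ↪ V) (out : Fin m ↪ V)
    (hsc : IsSuperconcentrator E inp out)
    (hdepth : ∀ (p : List V) (a b : V), IsPathFromTo E p a b → p.length ≤ d + 1) :
    (1 : ℝ) - ∑ i ∈ Finset.Icc 1 n,
        (n.choose i : ℝ) * (m.choose i) * (d * i) / (Fintype.card F) ≤
      ((Finset.univ.filter (fun r : V × V → F =>
          ∀ (k : ℕ) (X : Fin k → Fin n) (Y : Fin k → Fin m),
            Function.Injective X → Function.Injective Y →
              ((genMatrix E inp out r).submatrix X Y).det ≠ 0)).card : ℝ) /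
        (Fintype.card (V × V → F)) := by
  classical
  set N := Fintype.card F with hNdef
  set T := Fintype.card (V × V → F) with hTdef
  have hT : T = N ^ Fintype.card (V × V) := Fintype.card_fun
  have hN0 : 0 < N := Fintype.card_pos
  have hT0 : 0 < T := Fintype.card_pos
  set cond : (V × V → F) → Prop := fun r =>
    ∀ (k : ℕ) (X : Fin k → Fin n) (Y : Fin k → Fin m),
      Function.Injective X → Function.Injective Y →
        ((genMatrix E inp out r).submatrix X Y).det ≠ 0 with hcond
  set good := Finset.univ.filter cond with hgood
  set bad := Finset.univ.filter (fun r => ¬ cond r) with hbad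
  have hgb : good.card + bad.card = T := by
    rw [hgood, hbad, Finset.card_filter_add_card_filter_not, Finset.card_univ, hTdef]
  set S : ℕ := ∑ i ∈ Finset.Icc 1 n, n.choose i * m.choose i * (d * i) with hS
  have key : bad.card * N ≤ S * T := by
    rcases Nat.eq_zero_or_pos n with hn | hn
    · have hempty : bad = ∅ := by
        rw [hbad, Finset.filter_eq_empty_iff]
        intro r _
        rw [not_not]
        intro k X Y hX hY
        cases k with
        | zero => rw [Matrix.det_isEmpty]; exact one_ne_zero
        | succ k => subst hn; exact Fin.elim0 (X 0)
      rw [hempty]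
      simp
    rcases Nat.eq_zero_or_pos m with hm | hm
    · have hempty : bad = ∅ := by
        rw [hbad, Finset.filter_eq_empty_iff]
        intro r _
        rw [not_not]
        intro k X Y hX hY
        cases k with
        | zero => rw [Matrix.det_isEmpty]; exact one_ne_zero
        | succ k => subst hm; exact Fin.elim0 (Y 0)
      rw [hempty]
      simp
    set Zf : (i : ℕ) → Finset (Fin n) × Finset (Fin m) → Finset (V × V → F) :=
      fun i AB => Finset.univ.filter (fun r =>
        ∃ (Xx : Fin i → Fin n) (Yy : Fin i → Fin m),
          Function.Injective Xx ∧ Function.Injective Yy ∧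
          Finset.univ.image Xx = AB.1 ∧ Finset.univ.image Yy = AB.2 ∧
          ((genMatrix E inp out r).submatrix Xx Yy).det = 0) with hZf
    have hsub : bad ⊆ (Finset.Icc 1 n).biUnion (fun i =>
        ((Finset.powersetCard i (Finset.univ : Finset (Fin n))) ×ˢ
          (Finset.powersetCard i (Finset.univ : Finset (Fin m)))).biUnion (fun AB =>
            Zf i AB)) := by
      intro r hr
      rw [hbad, Finset.mem_filter] at hr
      obtain ⟨-, hbadr⟩ := hr
      simp only [hcond, not_forall, Classical.not_imp, not_not] at hbadr
      obtain ⟨k, Xx, Yy, hXx, hYy, hdet⟩ := hbadr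
      have hk1 : 1 ≤ k := by
        rcases Nat.eq_zero_or_pos k with hk | hk
        · exfalso
          subst hk
          rw [Matrix.det_isEmpty] at hdet
          exact one_ne_zero hdet
        · exact hk
      have hkn : k ≤ n := by
        have := Fintype.card_le_of_injective Xx hXx
        simpa using this
      rw [Finset.mem_biUnion]
      refine ⟨k, Finset.mem_Icc.mpr ⟨hk1, hkn⟩, ?_⟩
      rw [Finset.mem_biUnion]
      refine ⟨(Finset.univ.image Xx, Finset.univ.image Yy), ?_, ?_⟩
      · rw [Finset.mem_product]
        constructor
        · rw [Finset.mem_powersetCard]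
          exact ⟨Finset.subset_univ _, by
            rw [Finset.card_image_of_injective _ hXx, Finset.card_univ, Fintype.card_fin]⟩
        · rw [Finset.mem_powersetCard]
          exact ⟨Finset.subset_univ _, by
            rw [Finset.card_image_of_injective _ hYy, Finset.card_univ, Fintype.card_fin]⟩
      · rw [hZf, Finset.mem_filter]
        exact ⟨Finset.mem_univ _, Xx, Yy, hXx, hYy, rfl, rfl, hdet⟩
    have hZbound : ∀ i ∈ Finset.Icc 1 n,
        ∀ AB ∈ (Finset.powersetCard i (Finset.univ : Finset (Fin n))) ×ˢ
          (Finset.powersetCard i (Finset.univ : Finset (Fin m))),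
        (Zf i AB).card * N ≤ d * i * T := by
      intro i hi AB hAB
      rw [Finset.mem_product, Finset.mem_powersetCard, Finset.mem_powersetCard] at hAB
      obtain ⟨⟨-, hA⟩, ⟨-, hB⟩⟩ := hAB
      set X₀ : Fin i → Fin n := ⇑(AB.1.orderEmbOfFin hA) with hX₀
      set Y₀ : Fin i → Fin m := ⇑(AB.2.orderEmbOfFin hB) with hY₀
      have hX₀inj : Function.Injective X₀ := (AB.1.orderEmbOfFin hA).injective
      have hY₀inj : Function.Injective Y₀ := (AB.2.orderEmbOfFin hB).injective
      set Q := detPoly (F := F) E inp out X₀ Y₀ with hQ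
      have hQ0 : Q ≠ 0 := detPoly_ne_zero hsc hdepth X₀ Y₀ hX₀inj hY₀inj
      have hQdeg : Q.totalDegree ≤ i * d := detPoly_degree hdepth X₀ Y₀
      have hsubQ : Zf i AB ⊆ Finset.univ.filter
          (fun r : V × V → F => MvPolynomial.eval r Q = 0) := by
        intro r hr
        rw [hZf, Finset.mem_filter] at hr
        obtain ⟨-, Xx, Yy, hXx, hYy, hXim, hYim, hdet⟩ := hr
        rw [Finset.mem_filter]
        refine ⟨Finset.mem_univ _, ?_⟩
        rw [hQ, detPoly_eval hdepth]
        have hXr : ∀ a : Fin i, ∃ b : Fin i, X₀ b = Xx a := by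
          intro a
          have hmem : Xx a ∈ AB.1 := by
            rw [← hXim]; exact Finset.mem_image_of_mem _ (Finset.mem_univ _)
          have hrange : Set.range X₀ = ↑AB.1 := Finset.range_orderEmbOfFin AB.1 hA
          have : Xx a ∈ Set.range X₀ := by rw [hrange]; exact_mod_cast hmem
          exact this
        have hYr : ∀ a : Fin i, ∃ b : Fin i, Y₀ b = Yy a := by
          intro a
          have hmem : Yy a ∈ AB.2 := by
            rw [← hYim]; exact Finset.mem_image_of_mem _ (Finset.mem_univ _)
          have hrange : Set.range Y₀ = ↑AB.2 := Finset.range_orderEmbOfFin AB.2 hB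
          have : Yy a ∈ Set.range Y₀ := by rw [hrange]; exact_mod_cast hmem
          exact this
        choose πX hπX using hXr
        choose πY hπY using hYr
        have hπXinj : Function.Injective πX := by
          intro a a' h
          apply hXx
          rw [← hπX a, ← hπX a', h]
        have hπYinj : Function.Injective πY := by
          intro a a' h
          apply hYy
          rw [← hπY a, ← hπY a', h]
        set σ : Equiv.Perm (Fin i) :=
          Equiv.ofBijective πX (Finite.injective_iff_bijective.mp hπXinj) with hσ
        set τ : Equiv.Perm (Fin i) :=
          Equiv.ofBijective πY (Finite.injective_iff_bijective.mp hπYinj) with hτ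
        have hmat : (genMatrix E inp out r).submatrix Xx Yy
            = (((genMatrix E inp out r).submatrix X₀ Y₀).submatrix σ id).submatrix id τ := by
          ext a c
          simp only [Matrix.submatrix_apply, id_eq]
          rw [show σ a = πX a from rfl, show τ c = πY c from rfl, hπX, hπY]
        rw [hmat, Matrix.det_permute', Matrix.det_permute] at hdet
        have hs1 : ((Equiv.Perm.sign τ : ℤ) : F) ≠ 0 := by
          rcases Int.units_eq_one_or (Equiv.Perm.sign τ) with hs | hs <;> rw [hs] <;> simp
        have hs2 : ((Equiv.Perm.sign σ : ℤ) : F) ≠ 0 := by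
          rcases Int.units_eq_one_or (Equiv.Perm.sign σ) with hs | hs <;> rw [hs] <;> simp
        have := mul_eq_zero.mp hdet
        rcases this with h | h
        · exact absurd h hs1
        have := mul_eq_zero.mp h
        rcases this with h' | h'
        · exact absurd h' hs2
        exact h'
      calc (Zf i AB).card * N
          ≤ (Finset.univ.filter (fun r : V × V → F => MvPolynomial.eval r Q = 0)).card * N :=
            Nat.mul_le_mul_right _ (Finset.card_le_card hsubQ)
        _ ≤ Q.totalDegree * N ^ Fintype.card (V × V) := by
            have h := schwartz_zippel Q hQ0
            convert h using 3
            congr!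
        _ ≤ (i * d) * N ^ Fintype.card (V × V) := Nat.mul_le_mul_right _ hQdeg
        _ = d * i * T := by rw [hT]; ring
    have h1 : bad.card ≤ ∑ i ∈ Finset.Icc 1 n,
        ∑ AB ∈ (Finset.powersetCard i (Finset.univ : Finset (Fin n))) ×ˢ
          (Finset.powersetCard i (Finset.univ : Finset (Fin m))), (Zf i AB).card := by
      refine (Finset.card_le_card hsub).trans ?_
      refine (Finset.card_biUnion_le).trans ?_
      exact Finset.sum_le_sum fun i _ => Finset.card_biUnion_le
    calc bad.card * N
        ≤ (∑ i ∈ Finset.Icc 1 n,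
            ∑ AB ∈ (Finset.powersetCard i (Finset.univ : Finset (Fin n))) ×ˢ
              (Finset.powersetCard i (Finset.univ : Finset (Fin m))), (Zf i AB).card) * N :=
          Nat.mul_le_mul_right _ h1
      _ = ∑ i ∈ Finset.Icc 1 n,
            ∑ AB ∈ (Finset.powersetCard i (Finset.univ : Finset (Fin n))) ×ˢ
              (Finset.powersetCard i (Finset.univ : Finset (Fin m))), (Zf i AB).card * N := by
          rw [Finset.sum_mul]
          exact Finset.sum_congr rfl fun i _ => by rw [Finset.sum_mul]
      _ ≤ ∑ i ∈ Finset.Icc 1 n,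
            ∑ _AB ∈ (Finset.powersetCard i (Finset.univ : Finset (Fin n))) ×ˢ
              (Finset.powersetCard i (Finset.univ : Finset (Fin m))), d * i * T :=
          Finset.sum_le_sum fun i hi => Finset.sum_le_sum fun AB hAB => hZbound i hi AB hAB
      _ = ∑ i ∈ Finset.Icc 1 n, n.choose i * m.choose i * (d * i) * T := by
          refine Finset.sum_congr rfl fun i _ => ?_
          rw [Finset.sum_const, Finset.card_product, Finset.card_powersetCard,
            Finset.card_powersetCard, Finset.card_univ, Finset.card_univ,
            Fintype.card_fin, Fintype.card_fin, smul_eq_mul]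
          ring
      _ = S * T := by rw [hS, Finset.sum_mul]
  have hsum : ∑ i ∈ Finset.Icc 1 n,
      (n.choose i : ℝ) * (m.choose i) * (d * i) / (Fintype.card F) = (S : ℝ) / N := by
    rw [← Finset.sum_div, hS]
    push_cast
    rfl
  rw [hsum]
  have hbadT : bad.card ≤ T := by omega
  have hgoodc : (good.card : ℝ) = (T : ℝ) - (bad.card : ℝ) := by
    have : (good.card : ℝ) + (bad.card : ℝ) = (T : ℝ) := by exact_mod_cast hgb
    linarith
  have hkeyR : (bad.card : ℝ) * N ≤ (S : ℝ) * T := by exact_mod_cast key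
  have hN0R : (0 : ℝ) < N := by exact_mod_cast hN0
  have hT0R : (0 : ℝ) < T := by exact_mod_cast hT0
  have hfrac : (bad.card : ℝ) / T ≤ (S : ℝ) / N := by
    rw [div_le_div_iff₀ hT0R hN0R]
    linarith [hkeyR]
  have hgd : ((good.card : ℝ)) / T = 1 - (bad.card : ℝ) / T := by
    rw [hgoodc]
    field_simp
  rw [hTdef] at hgd
  rw [hgd]
  linarith [hfrac]
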